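/- arXiv:2505.17962 — 3 statements merged into one kernel-verified Lean document; each statement's English description precedes it below -/
import Mathlib

section
/- Let x ∈ ℝ, h > 0, and let f : ℝ → ℝ be continuous and strictly concave on [x, x + h] with f(x + h) ≠ f(x). Define p* = ((1/h)∫_x^{x+h} f(t) dt − f(x)) / (f(x + h) − f(x)), so that h·(p*·f(x+h) + (1 − p*)·f(x)) = ∫_x^{x+h} f(t) dt. Then f(x + h) > f(x) implies p* > 1/2, and f(x + h) < f(x) implies p* < 1/2. -/
/-- Analytic core of Proposition 3: for `f` continuous and strictly concave on `[x, x+h]`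
with `f (x+h) ≠ f x`, the exact terminal weight
`p* = ((1/h) ∫_x^{x+h} f − f x) / (f (x+h) − f x)` (so that
`h (p* f (x+h) + (1−p*) f x) = ∫_x^{x+h} f`) satisfies `p* > 1/2` when `f (x+h) > f x`
and `p* < 1/2` when `f (x+h) < f x`. -/
theorem optimal_terminal_weight_half (x h : ℝ) (hh : 0 < h) (f : ℝ → ℝ)
    (hcont : ContinuousOn f (Set.Icc x (x + h)))
    (hconc : StrictConcaveOn ℝ (Set.Icc x (x + h)) f)
    (hne : f (x + h) ≠ f x)
    (pstar : ℝ)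
    (hp : pstar = ((1 / h) * (∫ t in x..(x + h), f t) - f x) / (f (x + h) - f x)) :
    (f x < f (x + h) → 1 / 2 < pstar) ∧ (f (x + h) < f x → pstar < 1 / 2) := by
  set Δ : ℝ := f (x + h) - f x with hΔ
  set L : ℝ → ℝ := fun t => f x + (t - x) * (Δ / h) with hL
  have hxlt : x < x + h := by linarith
  -- pointwise inequality L ≤ f on [x, x+h]
  have hle : ∀ t ∈ Set.Icc x (x + h), L t ≤ f t := by
    intro t ht
    obtain ⟨ht1, ht2⟩ := ht
    set a : ℝ := (x + h - t) / h with ha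
    set b : ℝ := (t - x) / h with hb
    have ha0 : 0 ≤ a := div_nonneg (by linarith) hh.le
    have hb0 : 0 ≤ b := div_nonneg (by linarith) hh.le
    have hab : a + b = 1 := by
      rw [ha, hb, ← add_div, div_eq_one_iff_eq hh.ne']; ring
    have hcomb : a • x + b • (x + h) = t := by
      rw [ha, hb, smul_eq_mul, smul_eq_mul]; field_simp; ring
    have := hconc.concaveOn.2 (Set.left_mem_Icc.2 hxlt.le)
      (Set.right_mem_Icc.2 hxlt.le) ha0 hb0 hab
    rw [hcomb] at this
    have : a * f x + b * f (x + h) ≤ f t := by simpa [smul_eq_mul] using this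
    calc L t = a * f x + b * f (x + h) := by
          simp only [hL, ha, hb, hΔ]; field_simp; ring
      _ ≤ f t := this
  -- strict at the midpoint
  have hmid : L (x + h / 2) < f (x + h / 2) := by
    have hne' : x ≠ x + h := by linarith
    have h2 : (0:ℝ) < (1:ℝ)/2 := by norm_num
    have := hconc.2 (Set.left_mem_Icc.2 hxlt.le) (Set.right_mem_Icc.2 hxlt.le)
      hne' h2 h2 (by norm_num)
    have hcomb : ((1:ℝ)/2) • x + ((1:ℝ)/2) • (x + h) = x + h / 2 := by
      simp [smul_eq_mul]; ring
    rw [hcomb] at this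
    have hLval : L (x + h / 2) = (1/2) * f x + (1/2) * f (x + h) := by
      simp only [hL, hΔ]; field_simp; ring
    rw [hLval]
    simpa [smul_eq_mul] using this
  have hLcont : ContinuousOn L (Set.Icc x (x + h)) := by
    apply Continuous.continuousOn; continuity
  have hintlt : (∫ t in x..(x + h), L t) < ∫ t in x..(x + h), f t := by
    apply intervalIntegral.integral_lt_integral_of_continuousOn_of_le_of_exists_lt hxlt
      hLcont hcont (fun t ht => hle t (Set.Ioc_subset_Icc_self ht))
    exact ⟨x + h / 2, ⟨by linarith, by linarith⟩, hmid⟩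
  -- compute ∫ L
  have hLint : (∫ t in x..(x + h), L t) = h * f x + h / 2 * Δ := by
    have h1 : (∫ t in x..(x + h), L t)
        = (∫ t in x..(x + h), f x) + ∫ t in x..(x + h), (t - x) * (Δ / h) := by
      apply intervalIntegral.integral_add
      · exact intervalIntegrable_const
      · apply Continuous.intervalIntegrable; continuity
    have h2 : (∫ t in x..(x + h), (t - x) * (Δ / h))
        = (∫ t in x..(x + h), (t - x)) * (Δ / h) := by
      rw [← intervalIntegral.integral_mul_const]
    have h3 : (∫ t in x..(x + h), (t - x)) = h ^ 2 / 2 := by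
      have e : (∫ t in x..(x + h), (t - x))
          = (∫ t in x..(x + h), t) - ∫ _ in x..(x + h), x :=
        intervalIntegral.integral_sub (Continuous.intervalIntegrable continuous_id _ _) intervalIntegrable_const
      rw [e, integral_id, intervalIntegral.integral_const]
      simp; ring
    rw [h1, h2, h3, intervalIntegral.integral_const]
    field_simp
    ring
  have key : h * f x + h / 2 * Δ < ∫ t in x..(x + h), f t := hLint ▸ hintlt
  have key2 : Δ / 2 < (1 / h) * (∫ t in x..(x + h), f t) - f x := by
    have hm := mul_lt_mul_of_pos_left key (by positivity : (0:ℝ) < 1 / h)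
    have e : (1 / h) * (h * f x + h / 2 * Δ) = f x + Δ / 2 := by
      field_simp
    linarith [e ▸ hm]
  constructor
  · intro hlt
    have hΔpos : 0 < Δ := by simp [hΔ]; linarith
    rw [hp, lt_div_iff₀ hΔpos]
    linarith
  · intro hlt
    have hΔneg : Δ < 0 := by simp [hΔ]; linarith
    rw [hp, div_lt_iff_of_neg hΔneg]
    linarith
end

section
/- Let F ∈ (0,1) and a, b > 0. Define V(p) = p²a²/F + (1−p)²b²/(1−F) − (p·a + (1−p)·b)² for p ∈ ℝ. Then V is a quadratic polynomial in p with strictly positive leading coefficient a²/F + b²/(1−F) − (a − b)², and V attains its unique global minimum at p* = bF/(bF + a(1−F)); that is, V(p) > V(p*) for all p ≠ p*. -/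
/-- Variance minimisation for IW-ST(p): the variance
`V p = p² a² / F + (1−p)² b² / (1−F) − (p a + (1−p) b)²` is a quadratic in `p` with
strictly positive leading coefficient `a²/F + b²/(1−F) − (a−b)²`, and attains its unique
global minimum at `p* = bF / (bF + a(1−F))`. -/
theorem iwst_variance_quadratic_min (F a b : ℝ) (hF : F ∈ Set.Ioo (0 : ℝ) 1)
    (ha : 0 < a) (hb : 0 < b)
    (V : ℝ → ℝ)
    (hV : ∀ p, V p =
      p ^ 2 * a ^ 2 / F + (1 - p) ^ 2 * b ^ 2 / (1 - F) - (p * a + (1 - p) * b) ^ 2)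
    (pstar : ℝ) (hp : pstar = b * F / (b * F + a * (1 - F))) :
    (0 < a ^ 2 / F + b ^ 2 / (1 - F) - (a - b) ^ 2) ∧
    (∃ c₁ c₀ : ℝ, ∀ p, V p =
      (a ^ 2 / F + b ^ 2 / (1 - F) - (a - b) ^ 2) * p ^ 2 + c₁ * p + c₀) ∧
    (∀ p, p ≠ pstar → V pstar < V p) := by
  obtain ⟨hF0, hF1⟩ := hF
  have h1F : (0 : ℝ) < 1 - F := by linarith
  have hD : (0 : ℝ) < b * F + a * (1 - F) := by positivity
  have hDne : b * F + a * (1 - F) ≠ 0 := ne_of_gt hD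
  have hA : a ^ 2 / F + b ^ 2 / (1 - F) - (a - b) ^ 2
      = (b * F + a * (1 - F)) ^ 2 / (F * (1 - F)) := by
    field_simp
    ring
  have hApos : 0 < a ^ 2 / F + b ^ 2 / (1 - F) - (a - b) ^ 2 := by
    rw [hA]; positivity
  refine ⟨hApos, ⟨-2 * b ^ 2 / (1 - F) - 2 * (a - b) * b, b ^ 2 / (1 - F) - b ^ 2, ?_⟩, ?_⟩
  · intro p
    rw [hV p]
    field_simp
    ring
  · intro p hne
    have hdiff : V p - V pstar
        = (a ^ 2 / F + b ^ 2 / (1 - F) - (a - b) ^ 2) * (p - pstar) ^ 2 := by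
      rw [hV p, hV pstar, hp]
      field_simp
      ring
    have hsq : 0 < (p - pstar) ^ 2 := by
      have : p - pstar ≠ 0 := sub_ne_zero.mpr hne
      positivity
    nlinarith [mul_pos hApos hsq]
end

section
/- Let m ∈ ℝ and σ > 0, and define f(τ) = ln(τ/σ) + (m² + σ² − τ²)/(2τ²) for τ > 0. Then f attains its unique global minimum on (0, ∞) at τ = √(m² + σ²), and the minimum value is f(√(m² + σ²)) = (1/2)·ln(1 + (m/σ)²). -/
/-- Empirical-Bayes optimisation of the prior variance: the per-weight KL divergence
`f τ = ln(τ/σ) + (m² + σ² − τ²)/(2τ²)` attains its unique global minimum on `(0, ∞)` at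
`τ = √(m² + σ²)`, with minimum value `(1/2) ln(1 + (m/σ)²)`. -/
theorem kl_prior_variance_min (m σ : ℝ) (hσ : 0 < σ) (f : ℝ → ℝ)
    (hf : ∀ τ, f τ = Real.log (τ / σ) + (m ^ 2 + σ ^ 2 - τ ^ 2) / (2 * τ ^ 2)) :
    (∀ τ, 0 < τ → τ ≠ Real.sqrt (m ^ 2 + σ ^ 2) →
      f (Real.sqrt (m ^ 2 + σ ^ 2)) < f τ) ∧
    f (Real.sqrt (m ^ 2 + σ ^ 2)) = (1 / 2) * Real.log (1 + (m / σ) ^ 2) := by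
  have hs : 0 < m ^ 2 + σ ^ 2 := by positivity
  set s := m ^ 2 + σ ^ 2 with hsdef
  have hrs : 0 < Real.sqrt s := Real.sqrt_pos.mpr hs
  have hsq : Real.sqrt s ^ 2 = s := Real.sq_sqrt hs.le
  have hfs : f (Real.sqrt s) = Real.log (Real.sqrt s / σ) := by
    rw [hf, hsq]
    simp
  constructor
  · intro τ hτ hne
    have hτ2 : (0:ℝ) < τ ^ 2 := by positivity
    set x := s / τ ^ 2 with hxdef
    have hx : 0 < x := div_pos hs hτ2
    have hx1 : x ≠ 1 := by
      intro h
      apply hne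
      have : τ ^ 2 = s := by
        field_simp [hxdef] at h
        rw [hxdef, div_eq_one_iff_eq (ne_of_gt hτ2)] at h; linarith
      rw [← this, Real.sqrt_sq hτ.le]
    have hlog : Real.log x < x - 1 := Real.log_lt_sub_one_of_pos hx hx1
    have hlogx : Real.log x = Real.log s - Real.log (τ ^ 2) :=
      Real.log_div (ne_of_gt hs) (ne_of_gt hτ2)
    have hlogsq : Real.log (τ ^ 2) = 2 * Real.log τ := by
      rw [sq, Real.log_mul (ne_of_gt hτ) (ne_of_gt hτ)]; ring
    have hlogr : Real.log (Real.sqrt s) = Real.log s / 2 := by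
      rw [Real.log_sqrt hs.le]
    rw [hfs, hf τ, Real.log_div (ne_of_gt hτ) (ne_of_gt hσ),
      Real.log_div (ne_of_gt hrs) (ne_of_gt hσ), hlogr]
    have hexp : (s - τ ^ 2) / (2 * τ ^ 2) = (x - 1) / 2 := by
      rw [hxdef]
      field_simp
    rw [hexp]
    have hxval : Real.log x = Real.log s - 2 * Real.log τ := by
      rw [hlogx, hlogsq]
    nlinarith [hlog, hxval]
  · rw [hfs, Real.log_div (ne_of_gt hrs) (ne_of_gt hσ), Real.log_sqrt hs.le]
    have : 1 + (m / σ) ^ 2 = s / σ ^ 2 := by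
      field_simp
      ring
    rw [this, Real.log_div (ne_of_gt hs) (by positivity),
      Real.log_pow]
    push_cast
    ring
end
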